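/- arXiv:1109.1602 — 4 statements merged into one kernel-verified Lean document; each statement's English description precedes it below -/
import Mathlib

section
/- For every graph G on n vertices, the treewidth of G plus the treewidth of the complement of G is at least n - 2. -/
open SimpleGraph

/-- A tree decomposition of a graph `G`. -/
structure TreeDecomp {V : Type} (G : SimpleGraph V) where
  ι : Type
  T : SimpleGraph ι
  conn : T.Connected
  acyclic : T.IsAcyclic
  bag : ι → Finset V
  cover : ∀ v : V, ∃ i, v ∈ bag i
  edge_cover : ∀ ⦃u v : V⦄, G.Adj u v → ∃ i, u ∈ bag i ∧ v ∈ bag i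
  bag_conn : ∀ v : V, (T.induce {i | v ∈ bag i}).Connected

/-- The treewidth of `G`: minimum over tree decompositions of max bag size minus one. -/
noncomputable def treewidth {V : Type} (G : SimpleGraph V) : ℕ :=
  sInf {k | ∃ D : TreeDecomp G, ∀ i, (D.bag i).card ≤ k + 1}

/-- `G` is a `k`-tree: there is a construction ordering starting from a `(k+1)`-clique,
each later vertex being adjacent exactly to a `k`-clique of earlier vertices. -/
def IsKTree {V : Type} (k : ℕ) (G : SimpleGraph V) : Prop :=
  ∃ (n : ℕ) (e : V ≃ Fin n), k + 1 ≤ n ∧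
    (∀ i j : Fin n, i < j → (j : ℕ) < k + 1 → G.Adj (e.symm i) (e.symm j)) ∧
    ∀ j : Fin n, k + 1 ≤ (j : ℕ) →
      ∃ C : Finset V, G.IsNClique k C ∧ (∀ x ∈ C, ((e x : ℕ) < (j : ℕ))) ∧
        ∀ i : Fin n, i < j → (G.Adj (e.symm i) (e.symm j) ↔ e.symm i ∈ C)

/-- `G` has four vertices inducing a 4-cycle. -/
def HasInducedC4 {V : Type} (G : SimpleGraph V) : Prop :=
  ∃ a b c d : V, a ≠ c ∧ b ≠ d ∧
    G.Adj a b ∧ G.Adj b c ∧ G.Adj c d ∧ G.Adj d a ∧ ¬ G.Adj a c ∧ ¬ G.Adj b d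

/-- Two vertex sets touch in `G`: they intersect or an edge of `G` joins them. -/
def Touch {V : Type} (G : SimpleGraph V) (A B : Set V) : Prop :=
  (A ∩ B).Nonempty ∨ ∃ a ∈ A, ∃ b ∈ B, G.Adj a b

/-- A bramble in `G`: a family of connected, pairwise touching vertex sets. -/
def IsBramble {V : Type} (G : SimpleGraph V) (𝓑 : Set (Set V)) : Prop :=
  (∀ A ∈ 𝓑, (G.induce A).Connected) ∧ ∀ A ∈ 𝓑, ∀ B ∈ 𝓑, Touch G A B

/-- `S` is a hitting set of the bramble `𝓑`. -/
def IsHittingSet {V : Type} (𝓑 : Set (Set V)) (S : Set V) : Prop :=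
  ∀ A ∈ 𝓑, (A ∩ S).Nonempty

/-- The split graph `Q_n^k`: a `k`-clique (the vertices `< k`) with `n - k` further
vertices adjacent exactly to the clique. -/
def QGraph (n k : ℕ) : SimpleGraph (Fin n) where
  Adj i j := i ≠ j ∧ ((i : ℕ) < k ∨ (j : ℕ) < k)
  symm := by constructor; intro i j h; exact ⟨h.1.symm, h.2.symm⟩
  loopless := by constructor; intro i h; exact h.1 rfl


namespace NGaux

variable {ι : Type} {T : SimpleGraph ι}

/-- Connectivity of a vertex set via walks staying in the set. -/
def WConn (T : SimpleGraph ι) (A : Set ι) : Prop :=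
  ∀ ⦃x⦄, x ∈ A → ∀ ⦃y⦄, y ∈ A → ∃ w : T.Walk x y, ∀ z ∈ w.support, z ∈ A

lemma wconn_of_induce {A : Set ι} (h : (T.induce A).Connected) : WConn T A := by
  intro x hx y hy
  obtain ⟨w⟩ := h.preconnected ⟨x, hx⟩ ⟨y, hy⟩
  refine ⟨w.map (Embedding.induce A).toHom, ?_⟩
  intro z hz
  erw [Walk.support_map] at hz
  obtain ⟨⟨z', hz'⟩, _, rfl⟩ := List.mem_map.1 hz
  exact hz'

lemma nonempty_of_induce {A : Set ι} (h : (T.induce A).Connected) : A.Nonempty := by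
  have : Nonempty A := h.nonempty
  exact ⟨this.some, this.some.2⟩

lemma induce_connected_of_wconn {A : Set ι} (h : WConn T A) (hne : A.Nonempty) :
    (T.induce A).Connected := by
  have aux : ∀ {x y : ι} (w : T.Walk x y) (hx : x ∈ A) (hy : y ∈ A),
      (∀ z ∈ w.support, z ∈ A) → (T.induce A).Reachable ⟨x, hx⟩ ⟨y, hy⟩ := by
    intro x y w
    induction w with
    | nil => intro _ _ _; rfl
    | @cons a c y h q ih =>
      intro hx hy hsup
      have hc : c ∈ A := hsup c (by simp)
      have hadj : (T.induce A).Adj ⟨a, hx⟩ ⟨c, hc⟩ := h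
      exact (hadj.reachable).trans (ih hc hy (fun z hz => hsup z (by simp [hz])))
  obtain ⟨x0, hx0⟩ := hne
  haveI : Nonempty ↥A := ⟨⟨x0, hx0⟩⟩
  refine ⟨fun u v => ?_⟩
  obtain ⟨w, hw⟩ := h u.2 v.2
  have := aux w u.2 v.2 hw
  simpa using this

lemma wconn_path {A : Set ι} (hA : WConn T A) {x y : ι} (hx : x ∈ A) (hy : y ∈ A) :
    ∃ p : T.Walk x y, p.IsPath ∧ ∀ z ∈ p.support, z ∈ A := by
  classical
  obtain ⟨w, hw⟩ := hA hx hy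
  exact ⟨w.toPath, w.toPath.2, fun z hz => hw z (w.support_toPath_subset hz)⟩

lemma wconn_inter (hT : T.IsAcyclic) {A B : Set ι} (hA : WConn T A) (hB : WConn T B) :
    WConn T (A ∩ B) := by
  intro x hx y hy
  obtain ⟨p, hp, hpA⟩ := wconn_path hA hx.1 hy.1
  obtain ⟨q, hq, hqB⟩ := wconn_path hB hx.2 hy.2
  have hpq : p = q := congrArg Subtype.val (hT.path_unique ⟨p, hp⟩ ⟨q, hq⟩)
  exact ⟨p, fun z hz => ⟨hpA z hz, hqB z (hpq ▸ hz)⟩⟩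

lemma wconn_support {x y : ι} (w : T.Walk x y) : WConn T {z | z ∈ w.support} := by
  classical
  intro a ha b hb
  refine ⟨(w.takeUntil a ha).reverse.append (w.takeUntil b hb), ?_⟩
  intro z hz
  rw [Walk.mem_support_append_iff] at hz
  rcases hz with hz | hz
  · rw [Walk.support_reverse, List.mem_reverse] at hz
    exact w.support_takeUntil_subset ha hz
  · exact w.support_takeUntil_subset hb hz

lemma wconn_union {A B : Set ι} (hA : WConn T A) (hB : WConn T B) {x : ι}
    (hxA : x ∈ A) (hxB : x ∈ B) : WConn T (A ∪ B) := by
  have key : ∀ c ∈ A ∪ B, ∃ w : T.Walk c x, ∀ z ∈ w.support, z ∈ A ∪ B := by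
    intro c hc
    rcases hc with hc | hc
    · obtain ⟨w, hw⟩ := hA hc hxA
      exact ⟨w, fun z hz => Or.inl (hw z hz)⟩
    · obtain ⟨w, hw⟩ := hB hc hxB
      exact ⟨w, fun z hz => Or.inr (hw z hz)⟩
  intro a ha b hb
  obtain ⟨w1, hw1⟩ := key a ha
  obtain ⟨w2, hw2⟩ := key b hb
  refine ⟨w1.append w2.reverse, ?_⟩
  intro z hz
  rw [Walk.mem_support_append_iff] at hz
  rcases hz with hz | hz
  · exact hw1 z hz
  · rw [Walk.support_reverse, List.mem_reverse] at hz
    exact hw2 z hz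

/-- The component of `a` after deleting the edge `ab`. -/
def TSide (T : SimpleGraph ι) (a b : ι) : Set ι :=
  {v | (T.deleteEdges {s(a, b)}).Reachable a v}

lemma self_mem_tside {a b : ι} : a ∈ TSide T a b := Reachable.refl _

lemma tside_swap_eq (a b : ι) :
    TSide T b a = {v | (T.deleteEdges {s(a, b)}).Reachable b v} := by
  unfold TSide
  rw [Sym2.eq_swap]

lemma bridge_not_reach (hT : T.IsAcyclic) {a b : ι} (hab : T.Adj a b) :
    ¬ (T.deleteEdges {s(a, b)}).Reachable a b := by
  have h := (isAcyclic_iff_forall_adj_isBridge.mp hT) hab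
  rw [isBridge_iff] at h
  exact h

lemma tside_disj (hT : T.IsAcyclic) {a b : ι} (hab : T.Adj a b) {v : ι}
    (h1 : v ∈ TSide T a b) (h2 : v ∈ TSide T b a) : False := by
  rw [tside_swap_eq] at h2
  exact bridge_not_reach hT hab (h1.trans h2.symm)

lemma tside_total (hc : T.Connected) {a b : ι} (v : ι) :
    v ∈ TSide T a b ∨ v ∈ TSide T b a := by
  have step : ∀ {u w : ι}, T.Adj u w → (u ∈ TSide T a b ∨ u ∈ TSide T b a) →
      (w ∈ TSide T a b ∨ w ∈ TSide T b a) := by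
    intro u w huw hu
    by_cases he : s(u, w) = s(a, b)
    · rw [Sym2.eq_iff] at he
      rcases he with ⟨rfl, rfl⟩ | ⟨rfl, rfl⟩
      · exact Or.inr (by rw [tside_swap_eq]; exact Reachable.refl _)
      · exact Or.inl self_mem_tside
    · have hadj1 : (T.deleteEdges {s(a, b)}).Adj u w := by
        rw [deleteEdges_adj]
        exact ⟨huw, by simpa using he⟩
      have hadj2 : (T.deleteEdges {s(b, a)}).Adj u w := by
        rw [deleteEdges_adj]
        refine ⟨huw, ?_⟩
        simp only [Set.mem_singleton_iff]
        rw [Sym2.eq_swap (a := b)]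
        simpa using he
      rcases hu with hu | hu
      · exact Or.inl (hu.trans hadj1.reachable)
      · exact Or.inr (hu.trans hadj2.reachable)
  have aux : ∀ {x y : ι} (_ : T.Walk x y),
      (x ∈ TSide T a b ∨ x ∈ TSide T b a) → (y ∈ TSide T a b ∨ y ∈ TSide T b a) := by
    intro x y w
    induction w with
    | nil => exact id
    | cons h q ih => intro hx; exact ih (step h hx)
  exact aux ((hc.preconnected a v).some) (Or.inl self_mem_tside)

lemma reach_del_of_walk_in {C : Set ι} {a b : ι} (haC : a ∉ C) {x y : ι}
    (w : T.Walk x y) (hw : ∀ z ∈ w.support, z ∈ C) :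
    (T.deleteEdges {s(b, a)}).Reachable x y := by
  refine ⟨w.toDeleteEdges _ ?_⟩
  intro e he hes
  rw [Set.mem_singleton_iff] at hes
  subst hes
  exact haC (hw a (w.snd_mem_support_of_mem_edges he))

lemma wconn_subset_tside {C : Set ι} (hC : WConn T C) {a b : ι} (haC : a ∉ C)
    {m : ι} (hm : m ∈ C) (hmb : m ∈ TSide T b a) : C ⊆ TSide T b a := by
  intro c hc
  obtain ⟨w, hw⟩ := hC hm hc
  have := reach_del_of_walk_in (b := b) haC w hw
  rw [tside_swap_eq] at hmb ⊢
  rw [Sym2.eq_swap] at this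
  exact hmb.trans this

lemma crossing (hT : T.IsAcyclic) {a b : ι} (hab : T.Adj a b) {C : Set ι}
    (hC : WConn T C) {z1 z2 : ι} (hz1C : z1 ∈ C) (hz1 : z1 ∈ TSide T a b)
    (hz2C : z2 ∈ C) (hz2 : z2 ∈ TSide T b a) : a ∈ C ∧ b ∈ C := by
  classical
  obtain ⟨w, hw⟩ := hC hz1C hz2C
  by_cases he : s(a, b) ∈ w.edges
  · exact ⟨hw a (w.fst_mem_support_of_mem_edges he),
      hw b (w.snd_mem_support_of_mem_edges he)⟩
  · exfalso
    have hreach : (T.deleteEdges {s(a, b)}).Reachable z1 z2 := by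
      refine ⟨w.toDeleteEdges _ ?_⟩
      intro e hee hes
      rw [Set.mem_singleton_iff] at hes
      exact he (hes ▸ hee)
    rw [tside_swap_eq] at hz2
    exact bridge_not_reach hT hab ((hz1.trans hreach).trans hz2.symm)

lemma pointer (hT : T.IsAcyclic) {I M : Set ι} (hI : WConn T I) (hM : WConn T M)
    (hMne : M.Nonempty) (hMI : M ⊆ I) {i : ι} (hiI : i ∈ I) (hiM : i ∉ M) :
    ∃ y, y ∈ I ∧ T.Adj i y ∧ M ⊆ TSide T y i := by
  classical
  obtain ⟨m, hm⟩ := hMne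
  obtain ⟨p, hp, hpI⟩ := wconn_path hI hiI (hMI hm)
  have him : i ≠ m := fun h => hiM (h ▸ hm)
  obtain ⟨y, h, q, rfl⟩ := Walk.exists_eq_cons_of_ne him p
  rw [Walk.cons_isPath_iff] at hp
  have hyI : y ∈ I := hpI y (by simp)
  have hmside : m ∈ TSide T y i := by
    refine ⟨q.toDeleteEdges _ ?_⟩
    intro e hee hes
    rw [Set.mem_singleton_iff] at hes
    subst hes
    exact hp.2 (q.snd_mem_support_of_mem_edges hee)
  exact ⟨y, hyI, h, wconn_subset_tside hM hiM hm hmside⟩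

lemma sep (hT : T.IsAcyclic) (hc : T.Connected) {R S : Set ι}
    (hR : WConn T R) (hS : WConn T S) (hdis : ∀ z, z ∈ R → z ∈ S → False)
    (hRne : R.Nonempty) (hSne : S.Nonempty) :
    ∃ a b, T.Adj a b ∧ R ⊆ TSide T a b ∧ S ⊆ TSide T b a := by
  classical
  obtain ⟨r0, hr0⟩ := hRne
  obtain ⟨s0, hs0⟩ := hSne
  obtain ⟨p0⟩ := hc.preconnected r0 s0
  have aux : ∀ {r s : ι} (p : T.Walk r s), p.IsPath → r ∈ R → s ∈ S →
      ∃ a b, T.Adj a b ∧ R ⊆ TSide T a b ∧ S ⊆ TSide T b a := by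
    intro r s p
    induction p with
    | nil => intro _ hr hs; exact absurd hs (fun h => hdis _ hr h)
    | @cons r c s h q ih =>
      intro hp hr hs
      rw [Walk.cons_isPath_iff] at hp
      by_cases hcR : c ∈ R
      · exact ih hp.1 hcR hs
      · refine ⟨r, c, h, ?_, ?_⟩
        · exact wconn_subset_tside hR hcR hr self_mem_tside
        · have hrS : r ∉ S := fun hrS => hdis r hr hrS
          have hsside : s ∈ TSide T c r := by
            refine ⟨q.toDeleteEdges _ ?_⟩
            intro e hee hes
            rw [Set.mem_singleton_iff] at hes
            subst hes
            exact hp.2 (q.snd_mem_support_of_mem_edges hee)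
          exact wconn_subset_tside hS hrS hs hsside
  exact aux p0.toPath p0.toPath.2 hr0 hs0

end NGaux

namespace NGaux2
open NGaux

variable {ι : Type} {T : SimpleGraph ι}

lemma helly3 (hT : T.IsAcyclic) (hc : T.Connected) {A B C : Set ι}
    (hA : WConn T A) (hB : WConn T B) (hC : WConn T C)
    (hAB : ∃ z, z ∈ A ∧ z ∈ B) (hAC : ∃ z, z ∈ A ∧ z ∈ C)
    (hBC : ∃ z, z ∈ B ∧ z ∈ C) :
    ∃ m, m ∈ A ∧ m ∈ B ∧ m ∈ C := by
  classical
  obtain ⟨x, hxA, hxB⟩ := hAB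
  obtain ⟨y, hyA, hyC⟩ := hAC
  obtain ⟨z, hzB, hzC⟩ := hBC
  obtain ⟨pA, _, hpA⟩ := wconn_path hA hxA hyA
  obtain ⟨pB, _, hpB⟩ := wconn_path hB hxB hzB
  obtain ⟨pC, _, hpC⟩ := wconn_path hC hyC hzC
  set A' : Set ι := {w | w ∈ pA.support} with hA'def
  set B' : Set ι := {w | w ∈ pB.support} with hB'def
  set C' : Set ι := {w | w ∈ pC.support} with hC'def
  have hA'W : WConn T A' := wconn_support pA
  have hB'W : WConn T B' := wconn_support pB
  have hC'W : WConn T C' := wconn_support pC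
  have hA'sub : A' ⊆ A := fun w hw => hpA w hw
  have hB'sub : B' ⊆ B := fun w hw => hpB w hw
  have hC'sub : C' ⊆ C := fun w hw => hpC w hw
  have hxA' : x ∈ A' := pA.start_mem_support
  have hyA' : y ∈ A' := pA.end_mem_support
  have hxB' : x ∈ B' := pB.start_mem_support
  have hzB' : z ∈ B' := pB.end_mem_support
  have hyC' : y ∈ C' := pC.start_mem_support
  have hzC' : z ∈ C' := pC.end_mem_support
  -- suffices to find a common point of A', B', C'
  suffices h : ∃ m, m ∈ A' ∧ m ∈ B' ∧ m ∈ C' by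
    obtain ⟨m, h1, h2, h3⟩ := h
    exact ⟨m, hA'sub h1, hB'sub h2, hC'sub h3⟩
  by_cases hRS : ∃ m, m ∈ A' ∩ B' ∧ m ∈ A' ∩ C'
  · obtain ⟨m, h1, h2⟩ := hRS
    exact ⟨m, h1.1, h1.2, h2.2⟩
  · push_neg at hRS
    have hdis : ∀ w, w ∈ A' ∩ B' → w ∈ A' ∩ C' → False := fun w h1 h2 => hRS w h1 h2
    have hRW : WConn T (A' ∩ B') := wconn_inter hT hA'W hB'W
    have hSW : WConn T (A' ∩ C') := wconn_inter hT hA'W hC'W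
    obtain ⟨a, b, hab, hRside, hSside⟩ :=
      sep hT hc hRW hSW hdis ⟨x, hxA', hxB'⟩ ⟨y, hyA', hyC'⟩
    have hxside : x ∈ TSide T a b := hRside ⟨hxA', hxB'⟩
    have hyside : y ∈ TSide T b a := hSside ⟨hyA', hyC'⟩
    -- crossing for A'
    have hA'cross := crossing hT hab hA'W hxA' hxside hyA' hyside
    -- crossing for B' ∪ C'
    have hBCW : WConn T (B' ∪ C') := wconn_union hB'W hC'W hzB' hzC'
    have hBCcross := crossing hT hab hBCW (Or.inl hxB') hxside (Or.inr hyC') hyside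
    -- case analysis
    have haa : a ∈ TSide T a b := self_mem_tside
    have hbb : b ∈ TSide T b a := self_mem_tside
    rcases hBCcross.1 with haB | haC
    · rcases hBCcross.2 with hbB | hbC
      · -- a, b ∈ B' : then b ∈ A' ∩ B' ⊆ TSide a b, contradiction
        exact absurd (tside_disj hT hab (hRside ⟨hA'cross.2, hbB⟩) hbb) id
      · -- a ∈ B', b ∈ C' : use totality for z
        rcases tside_total hc (a := a) (b := b) z with hz1 | hz2
        · -- z ∈ side a b ; C' has b ∈ side b a and z : crossing gives a ∈ C'
          have := crossing hT hab hC'W hzC' hz1 (hbC) hbb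
          exact ⟨a, hA'cross.1, haB, this.1⟩
        · -- z ∈ side b a ; B' has a ∈ side a b and z : crossing gives b ∈ B'
          have := crossing hT hab hB'W haB haa hzB' hz2
          exact ⟨b, hA'cross.2, this.2, hbC⟩
    · -- a ∈ C' : a ∈ A' ∩ C' ⊆ TSide b a, contradiction with a ∈ TSide a b
      exact absurd (tside_disj hT hab haa (hSside ⟨hA'cross.1, haC⟩)) id

lemma helly (hT : T.IsAcyclic) (hc : T.Connected) {V : Type} [DecidableEq V]
    (s : Finset V) : ∀ (C : V → Set ι), (∀ v ∈ s, WConn T (C v)) →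
    (∀ u ∈ s, ∀ v ∈ s, ∃ z, z ∈ C u ∧ z ∈ C v) → s.Nonempty →
    ∃ j, ∀ v ∈ s, j ∈ C v := by
  classical
  induction s using Finset.induction_on with
  | empty => intro C _ _ h; exact absurd h (by simp)
  | @insert a t ha ih =>
    intro C hW hp _
    rcases t.eq_empty_or_nonempty with rfl | htne
    · obtain ⟨z, hz, _⟩ := hp a (by simp) a (by simp)
      exact ⟨z, by simpa using hz⟩
    · obtain ⟨j, hj⟩ := ih (fun v => C v ∩ C a)
        (fun v hv => wconn_inter hT (hW v (by simp [hv])) (hW a (by simp)))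
        (fun u hu v hv => by
          obtain ⟨m, h1, h2, h3⟩ := helly3 hT hc
            (hW u (by simp [hu])) (hW v (by simp [hv])) (hW a (by simp))
            (hp u (by simp [hu]) v (by simp [hv]))
            (hp u (by simp [hu]) a (by simp))
            (hp v (by simp [hv]) a (by simp))
          exact ⟨m, ⟨h1, h3⟩, ⟨h2, h3⟩⟩)
        htne
      refine ⟨j, ?_⟩
      intro v hv
      rcases Finset.mem_insert.mp hv with rfl | hv
      · exact (hj htne.choose htne.choose_spec).2
      · exact (hj v hv).1

end NGaux2

namespace NGaux3
open NGaux NGaux2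

/-- The two-tree covering lemma: given families of subtrees `A v` in tree `T` and
`B v` in tree `T'` such that each pair either meets in `T` or in `T'`, there is a
node `i` of `T` and a node `j` of `T'` such that every `v` has `i ∈ A v` or `j ∈ B v`. -/
lemma twoTree {ι κ V : Type} [Fintype V] {T : SimpleGraph ι} {T' : SimpleGraph κ}
    (hTc : T.Connected) (hTa : T.IsAcyclic) (hT'c : T'.Connected) (hT'a : T'.IsAcyclic)
    (A : V → Set ι) (B : V → Set κ) (I₀ : Set ι) (hI₀W : WConn T I₀) (hI₀fin : I₀.Finite)
    (hAI : ∀ v, A v ⊆ I₀) (hAW : ∀ v, WConn T (A v)) (hAne : ∀ v, (A v).Nonempty)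
    (hBW : ∀ v, WConn T' (B v)) (hBne : ∀ v, (B v).Nonempty)
    (hpair : ∀ u v, (∃ z, z ∈ A u ∧ z ∈ A v) ∨ (∃ z, z ∈ B u ∧ z ∈ B v)) :
    ∃ i j, ∀ v, i ∈ A v ∨ j ∈ B v := by
  classical
  by_cases hgood : ∃ i, ∀ u v : V, i ∉ A u → i ∉ A v → ∃ z, z ∈ B u ∧ z ∈ B v
  · obtain ⟨i, hi⟩ := hgood
    set s : Finset V := Finset.univ.filter (fun v => i ∉ A v) with hs
    rcases s.eq_empty_or_nonempty with hse | hsne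
    · refine ⟨i, hT'c.nonempty.some, fun v => Or.inl ?_⟩
      by_contra hiv
      have : v ∈ s := by simp [hs, hiv]
      simp [hse] at this
    · obtain ⟨j, hj⟩ := helly hT'a hT'c s B
        (fun v _ => hBW v)
        (fun u hu v hv => hi u v (by simp [hs] at hu; exact hu) (by simp [hs] at hv; exact hv))
        hsne
      refine ⟨i, j, fun v => ?_⟩
      by_cases hiv : i ∈ A v
      · exact Or.inl hiv
      · exact Or.inr (hj v (by simp [hs, hiv]))
  · push_neg at hgood
    -- extract bad pairs
    have hbad : ∀ i : ι, ∃ u w : V, i ∉ A u ∧ i ∉ A w ∧ ∀ z, z ∈ B u → z ∈ B w → False := by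
      intro i
      obtain ⟨u, w, hu, hw, h⟩ := hgood i
      exact ⟨u, w, hu, hw, fun z h1 h2 => h z h1 h2⟩
    choose bu bw hbu hbw hBdis using hbad
    -- the intersection subtrees
    set M : ι → Set ι := fun i => A (bu i) ∩ A (bw i) with hM
    have hMne : ∀ i, (M i).Nonempty := by
      intro i
      rcases hpair (bu i) (bw i) with ⟨z, h1, h2⟩ | ⟨z, h1, h2⟩
      · exact ⟨z, h1, h2⟩
      · exact absurd (hBdis i z h1 h2) id
    have hMW : ∀ i, WConn T (M i) := fun i => wconn_inter hTa (hAW _) (hAW _)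
    have hMI : ∀ i, M i ⊆ I₀ := fun i z hz => hAI _ hz.1
    have hiM : ∀ i, i ∉ M i := fun i hz => hbu i hz.1
    -- set up the finite subtree
    haveI : Fintype ↥I₀ := hI₀fin.fintype
    have hI₀ne : I₀.Nonempty := by
      obtain ⟨z, hz⟩ := hAne (bu hTc.nonempty.some)
      exact ⟨z, hAI _ hz⟩
    -- pointer function
    have hptr : ∀ x : ↥I₀, ∃ y, y ∈ I₀ ∧ T.Adj ↑x y ∧ M ↑x ⊆ TSide T y ↑x :=
      fun x => pointer hTa hI₀W (hMW ↑x) (hMne ↑x) (hMI ↑x) x.2 (hiM ↑x)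
    choose g hgI hgadj hgside using hptr
    set f : ↥I₀ → ↥I₀ := fun x => ⟨g x, hgI x⟩ with hf
    -- the induced graph on I₀ is a tree
    set G₀ : SimpleGraph ↥I₀ := T.induce I₀ with hG₀
    have hG₀conn : G₀.Connected := induce_connected_of_wconn hI₀W hI₀ne
    have hG₀acyc : G₀.IsAcyclic := by
      intro v c hc
      have : (c.map (Embedding.induce I₀).toHom).IsCycle :=
        hc.map (fun a b hab => Subtype.val_injective hab)
      exact hTa _ this
    have hG₀tree : G₀.IsTree := ⟨hG₀conn, hG₀acyc⟩
    haveI : Fintype G₀.edgeSet := Set.Finite.fintype (Set.toFinite _)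
    have hcard : G₀.edgeFinset.card + 1 = Fintype.card ↥I₀ := hG₀tree.card_edgeFinset
    -- pigeonhole
    have hadjG₀ : ∀ x : ↥I₀, G₀.Adj x (f x) := fun x => hgadj x
    have hlt : Fintype.card ↥G₀.edgeFinset < Fintype.card ↥I₀ := by
      rw [Fintype.card_coe]
      omega
    obtain ⟨x, y, hxy, hfeq⟩ := Fintype.exists_ne_map_eq_of_card_lt
      (fun x : ↥I₀ => (⟨s(x, f x), by rw [mem_edgeFinset]; exact hadjG₀ x⟩ : ↥G₀.edgeFinset))
      hlt
    have hsym : s(x, f x) = s(y, f y) := congrArg Subtype.val hfeq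
    rw [Sym2.eq_iff] at hsym
    rcases hsym with ⟨rfl, _⟩ | ⟨hxfy, hfxy⟩
    · exact absurd rfl hxy
    · -- f x = y and f y = x
      exfalso
      have hTxy : T.Adj ↑x ↑y := by
        have := hgadj x
        rw [show g x = (↑(f x) : ι) from rfl, hfxy] at this
        exact this
      have hMx : M ↑x ⊆ TSide T ↑y ↑x := by
        have := hgside x
        rw [show g x = (↑(f x) : ι) from rfl, hfxy] at this
        exact this
      have hMy : M ↑y ⊆ TSide T ↑x ↑y := by
        have := hgside y
        rw [show g y = (↑(f y) : ι) from rfl, ← hxfy] at this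
        exact this
      -- the four A-sets lie on opposite sides
      obtain ⟨mx, hmx⟩ := hMne ↑x
      obtain ⟨my, hmy⟩ := hMne ↑y
      have hAux : A (bu ↑x) ⊆ TSide T ↑y ↑x :=
        wconn_subset_tside (hAW _) (hbu ↑x) hmx.1 (hMx hmx)
      have hAwx : A (bw ↑x) ⊆ TSide T ↑y ↑x :=
        wconn_subset_tside (hAW _) (hbw ↑x) hmx.2 (hMx hmx)
      have hAuy : A (bu ↑y) ⊆ TSide T ↑x ↑y :=
        wconn_subset_tside (hAW _) (hbu ↑y) hmy.1 (hMy hmy)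
      have hAwy : A (bw ↑y) ⊆ TSide T ↑x ↑y :=
        wconn_subset_tside (hAW _) (hbw ↑y) hmy.2 (hMy hmy)
      -- hence the B-sets pairwise intersect across
      have hcrossB : ∀ (u v : V), A u ⊆ TSide T ↑y ↑x → A v ⊆ TSide T ↑x ↑y →
          ∃ z, z ∈ B u ∧ z ∈ B v := by
        intro u v hu hv
        rcases hpair u v with ⟨z, h1, h2⟩ | h
        · exact absurd (tside_disj hTa hTxy.symm (hu h1) (hv h2)) id
        · exact h
      have hBuxuy := hcrossB _ _ hAux hAuy
      have hBuxwy := hcrossB _ _ hAux hAwy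
      have hBwxuy := hcrossB _ _ hAwx hAuy
      have hBwxwy := hcrossB _ _ hAwx hAwy
      -- now work in T' : B (bu x) and B (bw x) are disjoint
      obtain ⟨a, b, hab, hRside, hSside⟩ := sep hT'a hT'c (hBW (bu ↑x)) (hBW (bw ↑x))
        (fun z h1 h2 => hBdis ↑x z h1 h2) (hBne _) (hBne _)
      obtain ⟨z1, hz1u, hz1⟩ := hBuxuy
      obtain ⟨z2, hz2w, hz2⟩ := hBwxuy
      have ha1 : a ∈ B (bu ↑y) :=
        (crossing hT'a hab (hBW (bu ↑y)) hz1 (hRside hz1u) hz2 (hSside hz2w)).1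
      obtain ⟨z3, hz3u, hz3⟩ := hBuxwy
      obtain ⟨z4, hz4w, hz4⟩ := hBwxwy
      have ha2 : a ∈ B (bw ↑y) :=
        (crossing hT'a hab (hBW (bw ↑y)) hz3 (hRside hz3u) hz4 (hSside hz4w)).1
      exact hBdis ↑y a ha1 ha2

end NGaux3

open NGaux NGaux2 NGaux3

/-- The trivial tree decomposition with a single bag. -/
noncomputable def trivDecomp {V : Type} [Fintype V] (G : SimpleGraph V) : TreeDecomp G where
  ι := Unit
  T := ⊥
  conn := by
    refine ⟨fun u v => ?_⟩
    rw [Subsingleton.elim u v]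
  acyclic := isAcyclic_bot
  bag := fun _ => Finset.univ
  cover := fun v => ⟨(), Finset.mem_univ v⟩
  edge_cover := fun u v _ => ⟨(), Finset.mem_univ u, Finset.mem_univ v⟩
  bag_conn := by
    intro v
    haveI : Nonempty ↥{i : Unit | v ∈ (Finset.univ : Finset V)} :=
      ⟨⟨(), by simp⟩⟩
    refine ⟨fun u w => ?_⟩
    rw [Subsingleton.elim u w]

lemma tw_set_nonempty {V : Type} [Fintype V] (G : SimpleGraph V) :
    {k | ∃ D : TreeDecomp G, ∀ i, (D.bag i).card ≤ k + 1}.Nonempty :=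
  ⟨Fintype.card V, trivDecomp G, fun _ => by
    show (Finset.univ : Finset V).card ≤ _
    rw [Finset.card_univ]
    exact Nat.le_succ _⟩

theorem nordhaus_gaddum_treewidth' {V : Type} [Fintype V] (G : SimpleGraph V) :
    Fintype.card V - 2 ≤ treewidth G + treewidth Gᶜ := by
  classical
  have h1 : treewidth G ∈ {k | ∃ D : TreeDecomp G, ∀ i, (D.bag i).card ≤ k + 1} :=
    Nat.sInf_mem (tw_set_nonempty G)
  have h2 : treewidth Gᶜ ∈ {k | ∃ D : TreeDecomp Gᶜ, ∀ i, (D.bag i).card ≤ k + 1} :=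
    Nat.sInf_mem (tw_set_nonempty Gᶜ)
  obtain ⟨D, hD⟩ := h1
  obtain ⟨D', hD'⟩ := h2
  suffices h : Fintype.card V ≤ (treewidth G + 1) + (treewidth Gᶜ + 1) by omega
  -- the subtree families
  set A₀ : V → Set D.ι := fun v => {i | v ∈ D.bag i} with hA₀
  set B₀ : V → Set D'.ι := fun v => {j | v ∈ D'.bag j} with hB₀
  have hA₀W : ∀ v, WConn D.T (A₀ v) := fun v => wconn_of_induce (D.bag_conn v)
  have hB₀W : ∀ v, WConn D'.T (B₀ v) := fun v => wconn_of_induce (D'.bag_conn v)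
  have hA₀ne : ∀ v, (A₀ v).Nonempty := fun v => D.cover v
  have hB₀ne : ∀ v, (B₀ v).Nonempty := fun v => D'.cover v
  have hpair₀ : ∀ u v, (∃ z, z ∈ A₀ u ∧ z ∈ A₀ v) ∨ (∃ z, z ∈ B₀ u ∧ z ∈ B₀ v) := by
    intro u v
    by_cases huv : u = v
    · subst huv
      obtain ⟨i, hi⟩ := hA₀ne u
      exact Or.inl ⟨i, hi, hi⟩
    · by_cases hadj : G.Adj u v
      · obtain ⟨i, hi1, hi2⟩ := D.edge_cover hadj
        exact Or.inl ⟨i, hi1, hi2⟩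
      · have hcadj : Gᶜ.Adj u v := by rw [compl_adj]; exact ⟨huv, hadj⟩
        obtain ⟨j, hj1, hj2⟩ := D'.edge_cover hcadj
        exact Or.inr ⟨j, hj1, hj2⟩
  -- construct the finite connected hull I₀
  choose nn hnn using D.cover
  set mm : V → V → D.ι := fun u v =>
    if h : ∃ z, z ∈ A₀ u ∧ z ∈ A₀ v then h.choose else nn u with hmm
  set pts : Finset D.ι :=
    Finset.image nn Finset.univ ∪ Finset.image (fun p : V × V => mm p.1 p.2) Finset.univ
    with hpts
  set pp : D.ι → D.ι → Σ' (x y : D.ι), D.T.Walk x y :=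
    fun p q => ⟨p, q, (D.conn.preconnected p q).some⟩ with hpp
  set F : Finset D.ι :=
    pts.biUnion (fun p => pts.biUnion (fun q => ((pp p q).2.2.support).toFinset)) with hF
  set I₀ : Set D.ι := ↑F with hI₀
  have hI₀fin : I₀.Finite := F.finite_toSet
  have hmemI₀ : ∀ z : D.ι, z ∈ I₀ ↔ ∃ p ∈ pts, ∃ q ∈ pts, z ∈ (pp p q).2.2.support := by
    intro z
    simp [hI₀, hF, Finset.mem_biUnion, List.mem_toFinset]
  have hpts_sub : ∀ p ∈ pts, (p : D.ι) ∈ I₀ := by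
    intro p hp
    rw [hmemI₀]
    exact ⟨p, hp, p, hp, Walk.start_mem_support _⟩
  have hsupp_sub : ∀ p ∈ pts, ∀ q ∈ pts, ∀ z ∈ (pp p q).2.2.support, z ∈ I₀ := by
    intro p hp q hq z hz
    rw [hmemI₀]
    exact ⟨p, hp, q, hq, hz⟩
  have hI₀W : WConn D.T I₀ := by
    intro a ha b hb
    rw [hmemI₀] at ha hb
    obtain ⟨p, hp, q, hq, haz⟩ := ha
    obtain ⟨p', hp', q', hq', hbz⟩ := hb
    obtain ⟨w1, hw1⟩ := wconn_support (pp p q).2.2 haz (Walk.start_mem_support _)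
    obtain ⟨w3, hw3⟩ := wconn_support (pp p' q').2.2 (Walk.start_mem_support _) hbz
    refine ⟨(w1.append (pp p p').2.2).append w3, ?_⟩
    intro z hz
    rw [Walk.mem_support_append_iff] at hz
    rcases hz with hz | hz
    · rw [Walk.mem_support_append_iff] at hz
      rcases hz with hz | hz
      · exact hsupp_sub p hp q hq z (hw1 z hz)
      · exact hsupp_sub p hp p' hp' z hz
    · exact hsupp_sub p' hp' q' hq' z (hw3 z hz)
  -- restricted family
  set A' : V → Set D.ι := fun v => A₀ v ∩ I₀ with hA'
  have hA'I : ∀ v, A' v ⊆ I₀ := fun v z hz => hz.2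
  have hA'W : ∀ v, WConn D.T (A' v) := fun v => wconn_inter D.acyclic (hA₀W v) hI₀W
  have hnnpts : ∀ v, nn v ∈ pts := by
    intro v
    rw [hpts]
    exact Finset.mem_union_left _ (Finset.mem_image_of_mem nn (Finset.mem_univ v))
  have hmmpts : ∀ u v, mm u v ∈ pts := by
    intro u v
    rw [hpts]
    exact Finset.mem_union_right _
      (Finset.mem_image_of_mem _ (Finset.mem_univ (u, v)))
  have hA'ne : ∀ v, (A' v).Nonempty :=
    fun v => ⟨nn v, hnn v, hpts_sub _ (hnnpts v)⟩
  have hpair' : ∀ u v, (∃ z, z ∈ A' u ∧ z ∈ A' v) ∨ (∃ z, z ∈ B₀ u ∧ z ∈ B₀ v) := by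
    intro u v
    rcases hpair₀ u v with h | h
    · left
      have hmmuv : mm u v = h.choose := by rw [hmm]; exact dif_pos h
      have hin : mm u v ∈ I₀ := hpts_sub _ (hmmpts u v)
      refine ⟨mm u v, ⟨?_, hin⟩, ⟨?_, hin⟩⟩
      · rw [hmmuv]; exact h.choose_spec.1
      · rw [hmmuv]; exact h.choose_spec.2
    · exact Or.inr h
  -- apply the two-tree covering lemma
  obtain ⟨i, j, hcov⟩ := twoTree D.conn D.acyclic D'.conn D'.acyclic A' B₀ I₀
    hI₀W hI₀fin hA'I hA'W hA'ne hB₀W hB₀ne hpair'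
  have hsub : (Finset.univ : Finset V) ⊆ D.bag i ∪ D'.bag j := by
    intro v _
    rcases hcov v with h | h
    · exact Finset.mem_union_left _ h.1
    · exact Finset.mem_union_right _ h
  calc Fintype.card V = (Finset.univ : Finset V).card := (Finset.card_univ).symm
    _ ≤ (D.bag i ∪ D'.bag j).card := Finset.card_le_card hsub
    _ ≤ (D.bag i).card + (D'.bag j).card := Finset.card_union_le _ _
    _ ≤ (treewidth G + 1) + (treewidth Gᶜ + 1) := Nat.add_le_add (hD i) (hD' j)

theorem nordhaus_gaddum_treewidth {V : Type} [Fintype V] (G : SimpleGraph V) :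
    Fintype.card V - 2 ≤ treewidth G + treewidth Gᶜ := nordhaus_gaddum_treewidth' G
end

section
/- Let G be a graph with no induced 4-cycle. Then the collection B = { {v,w} : vw is an edge of the complement of G } is a bramble in the complement of G. -/
open SimpleGraph

theorem bramble_of_no_inducedC4 {V : Type} (G : SimpleGraph V) (h4 : ¬ HasInducedC4 G) :
    IsBramble Gᶜ {S : Set V | ∃ v w : V, Gᶜ.Adj v w ∧ S = {v, w}} := by
  constructor
  · rintro A ⟨v, w, hvw, rfl⟩
    rw [SimpleGraph.connected_iff]
    refine ⟨?_, ⟨⟨v, by simp⟩⟩⟩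
    rintro ⟨a, ha⟩ ⟨b, hb⟩
    simp only [Set.mem_insert_iff, Set.mem_singleton_iff] at ha hb
    rcases ha with rfl | rfl <;> rcases hb with rfl | rfl
    · exact SimpleGraph.Reachable.refl _
    · exact SimpleGraph.Adj.reachable hvw
    · exact SimpleGraph.Adj.reachable hvw.symm
    · exact SimpleGraph.Reachable.refl _
  · rintro A ⟨v, w, hvw, rfl⟩ B ⟨x, y, hxy, rfl⟩
    by_cases hint : (({v, w} : Set V) ∩ {x, y}).Nonempty
    · exact Or.inl hint
    · right
      by_contra hcon
      push_neg at hcon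
      have hne : ∀ a ∈ ({v, w} : Set V), ∀ b ∈ ({x, y} : Set V), a ≠ b := by
        intro a haa b hbb h
        exact hint ⟨a, haa, h ▸ hbb⟩
      have hadj : ∀ a ∈ ({v, w} : Set V), ∀ b ∈ ({x, y} : Set V), G.Adj a b := by
        intro a haa b hbb
        have := hcon a haa b hbb
        rw [SimpleGraph.compl_adj] at this
        push_neg at this
        exact this (hne a haa b hbb)
      apply h4
      refine ⟨v, x, w, y, hvw.ne, hxy.ne, ?_, ?_, ?_, ?_, ?_, ?_⟩
      · exact hadj v (by simp) x (by simp)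
      · exact (hadj w (by simp) x (by simp)).symm
      · exact hadj w (by simp) y (by simp)
      · exact (hadj v (by simp) y (by simp)).symm
      · exact hvw.2
      · exact hxy.2
end

section
/- Every graph G on n vertices with girth at least 5 satisfies tw(complement of G) ≥ n - 3. -/
open SimpleGraph

namespace TWAux

variable {ι : Type} {T : SimpleGraph ι}

/-- The unique path between two vertices of a connected graph (junk if not acyclic). -/
noncomputable def pth (hc : T.Connected) (a b : ι) : T.Path a b :=
  letI := Classical.decEq ι
  (Classical.choice (hc.preconnected a b)).toPath

lemma pth_eq (hc : T.Connected) (ha : T.IsAcyclic) {a b : ι} (p : T.Walk a b)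
    (hp : p.IsPath) : (pth hc a b : T.Walk a b) = p :=
  congrArg Subtype.val (ha.path_unique (pth hc a b) ⟨p, hp⟩)

lemma length_pos_of_ne {a b : ι} (p : T.Walk a b) (h : a ≠ b) : 0 < p.length := by
  rcases Nat.eq_zero_or_pos p.length with h0 | h0
  · exact absurd (SimpleGraph.Walk.eq_of_length_eq_zero h0) h
  · exact h0

lemma getVert_one_mem {a b : ι} (p : T.Walk a b) (h : a ≠ b) : p.getVert 1 ∈ p.support :=
  SimpleGraph.Walk.mem_support_iff_exists_getVert.mpr ⟨1, rfl, length_pos_of_ne p h⟩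

lemma getVert_one_takeUntil [DecidableEq ι] {a c z : ι} (p : T.Walk a c) (hz : z ∈ p.support)
    (hza : z ≠ a) : (p.takeUntil z hz).getVert 1 = p.getVert 1 := by
  have hpos : 0 < (p.takeUntil z hz).length := length_pos_of_ne _ (fun h => hza h.symm)
  conv_rhs => rw [← p.take_spec hz]
  rw [SimpleGraph.Walk.getVert_append]
  by_cases h1 : 1 < (p.takeUntil z hz).length
  · rw [if_pos h1]
  · rw [if_neg h1]
    have hl : (p.takeUntil z hz).length = 1 := by omega
    have h2 := (p.takeUntil z hz).getVert_length
    rw [hl] at h2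
    rw [h2, hl]
    simp [SimpleGraph.Walk.getVert_zero]

lemma getVert_one_eq (hc : T.Connected) (ha : T.IsAcyclic) [DecidableEq ι] {a b c z : ι}
    (p : T.Walk a b) (q : T.Walk a c) (hp : p.IsPath) (hq : q.IsPath)
    (hzp : z ∈ p.support) (hzq : z ∈ q.support) (hza : z ≠ a) :
    p.getVert 1 = q.getVert 1 := by
  have h1 : p.takeUntil z hzp = q.takeUntil z hzq := by
    rw [← pth_eq hc ha _ (hp.takeUntil hzp), ← pth_eq hc ha _ (hq.takeUntil hzq)]
  rw [← getVert_one_takeUntil p hzp hza, ← getVert_one_takeUntil q hzq hza, h1]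

lemma dich (hc : T.Connected) (ha : T.IsAcyclic) [DecidableEq ι] {a b c : ι} (hab : T.Adj a b)
    (h1 : b ∈ (pth hc a c : T.Walk a c).support)
    (h2 : a ∈ (pth hc b c : T.Walk b c).support) : False := by
  set p : T.Walk a c := (pth hc a c : T.Walk a c) with hpdef
  have hpp : p.IsPath := (pth hc a c).2
  have hd : (p.dropUntil b h1).IsPath := hpp.dropUntil h1
  have hna : a ∉ (p.dropUntil b h1).support := by
    intro haD
    have hnodup : p.support.Nodup := hpp.support_nodup
    have hsplit : p.support = (p.takeUntil b h1).support ++ (p.dropUntil b h1).support.tail := by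
      conv_lhs => rw [← p.take_spec h1]
      rw [SimpleGraph.Walk.support_append]
    rw [hsplit] at hnodup
    have hdisj := List.disjoint_of_nodup_append hnodup
    have haT : a ∈ (p.takeUntil b h1).support := SimpleGraph.Walk.start_mem_support _
    have haTail : a ∈ (p.dropUntil b h1).support.tail := by
      have hcons := (p.dropUntil b h1).support_eq_cons
      rw [hcons] at haD
      rcases List.mem_cons.mp haD with h | h
      · exact absurd h hab.ne
      · exact h
    exact hdisj haT haTail
  have heq := pth_eq hc ha _ hd
  rw [heq] at h2
  exact hna h2

lemma between (hc : T.Connected) (ha : T.IsAcyclic) [DecidableEq ι] {a j c : ι}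
    (hs : (pth hc a j : T.Walk a j).getVert 1 ≠ (pth hc a c : T.Walk a c).getVert 1) :
    a ∈ (pth hc j c : T.Walk j c).support := by
  set p : T.Walk a j := (pth hc a j : T.Walk a j) with hpdef
  set q : T.Walk a c := (pth hc a c : T.Walk a c) with hqdef
  have hpp : p.IsPath := (pth hc a j).2
  have hqp : q.IsPath := (pth hc a c).2
  have hinter : ∀ z, z ∈ p.support → z ∈ q.support → z = a := by
    intro z hzp hzq
    by_contra hne
    exact hs (getVert_one_eq hc ha p q hpp hqp hzp hzq hne)
  have key : (p.reverse.append q).IsPath := by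
    rw [SimpleGraph.Walk.isPath_def, SimpleGraph.Walk.support_append]
    refine List.Nodup.append hpp.reverse.support_nodup (hqp.support_nodup.sublist (List.tail_sublist _)) ?_
    intro z hz1 hz2
    have hz1' : z ∈ p.support := by
      rw [SimpleGraph.Walk.support_reverse, List.mem_reverse] at hz1
      exact hz1
    have hz2' : z ∈ q.support := List.mem_of_mem_tail hz2
    have hza : z = a := hinter z hz1' hz2'
    have : a ∉ q.support.tail := by
      have hnd := hqp.support_nodup
      rw [q.support_eq_cons] at hnd
      exact (List.nodup_cons.mp hnd).1
    rw [hza] at hz2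
    exact this hz2
  have heq := pth_eq hc ha _ key
  rw [heq, SimpleGraph.Walk.mem_support_append_iff]
  exact Or.inl (SimpleGraph.Walk.end_mem_support p.reverse)

lemma convex [DecidableEq ι] (hc : T.Connected) (ha : T.IsAcyclic) {S : Set ι} (hS : (T.induce S).Connected)
    {a b : ι} (haS : a ∈ S) (hbS : b ∈ S) {c : ι}
    (hcm : c ∈ (pth hc a b : T.Walk a b).support) : c ∈ S := by
  have w' := Classical.choice (hS.preconnected ⟨a, haS⟩ ⟨b, hbS⟩)
  let w : T.Walk a b := w'.map (SimpleGraph.Embedding.induce S).toHom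
  have hsup : ∀ z ∈ w.support, z ∈ S := by
    intro z hz
    rw [show w.support = w'.support.map _ from SimpleGraph.Walk.support_map _ _] at hz
    obtain ⟨z', _, rfl⟩ := List.mem_map.mp hz
    exact z'.2
  have heq := pth_eq hc ha (w.toPath : T.Walk a b) w.toPath.2
  rw [heq] at hcm
  exact hsup c (SimpleGraph.Walk.support_toPath_subset w hcm)


lemma girth_le_of_cycle {V : Type} {G : SimpleGraph V} {u : V} (c : G.Walk u u)
    (hc : c.IsCycle) : G.girth ≤ c.length := by
  have h4 : G.egirth ≤ (c.length : ℕ∞) := le_egirth.mp le_rfl u c hc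
  have := ENat.toNat_le_toNat h4 (by simp)
  simpa [SimpleGraph.girth] using this

lemma no_tri {V : Type} {G : SimpleGraph V} (hg : 5 ≤ G.girth) {u v w : V}
    (h1 : G.Adj u v) (h2 : G.Adj v w) (h3 : G.Adj w u) : False := by
  have huv := h1.ne
  have hvw := h2.ne
  have hwu := h3.ne
  let c : G.Walk u u := .cons h1 (.cons h2 (.cons h3 .nil))
  have hcyc : c.IsCycle := by
    rw [SimpleGraph.Walk.isCycle_def, SimpleGraph.Walk.isTrail_def]
    refine ⟨?_, by simp [c], ?_⟩
    · simp only [c, SimpleGraph.Walk.edges_cons, SimpleGraph.Walk.edges_nil]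
      simp [List.nodup_cons, Sym2.eq_iff]
      tauto
    · simp only [c, SimpleGraph.Walk.support_cons, SimpleGraph.Walk.support_nil, List.tail_cons]
      simp [List.nodup_cons]
      tauto
  have := girth_le_of_cycle c hcyc
  simp only [c] at this
  simp [SimpleGraph.Walk.length_cons] at this
  omega

lemma no_c4 {V : Type} {G : SimpleGraph V} (hg : 5 ≤ G.girth) {u x v y : V}
    (h1 : G.Adj u x) (h2 : G.Adj x v) (h3 : G.Adj v y) (h4 : G.Adj y u)
    (huv : u ≠ v) (hxy : x ≠ y) : False := by
  have hux := h1.ne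
  have hxv := h2.ne
  have hvy := h3.ne
  have hyu := h4.ne
  let c : G.Walk u u := .cons h1 (.cons h2 (.cons h3 (.cons h4 .nil)))
  have hcyc : c.IsCycle := by
    rw [SimpleGraph.Walk.isCycle_def, SimpleGraph.Walk.isTrail_def]
    refine ⟨?_, by simp [c], ?_⟩
    · simp only [c, SimpleGraph.Walk.edges_cons, SimpleGraph.Walk.edges_nil]
      simp [List.nodup_cons, Sym2.eq_iff]
      tauto
    · simp only [c, SimpleGraph.Walk.support_cons, SimpleGraph.Walk.support_nil, List.tail_cons]
      simp [List.nodup_cons]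
      tauto
  have := girth_le_of_cycle c hcyc
  simp only [c] at this
  simp [SimpleGraph.Walk.length_cons] at this
  omega



lemma nb {V ι : Type} {G : SimpleGraph V} {T : SimpleGraph ι} [DecidableEq ι]
    (hc : T.Connected) (ha : T.IsAcyclic) {bag : ι → Finset V}
    (hconv : ∀ v : V, ∀ a b c : ι, v ∈ bag a → v ∈ bag b →
      c ∈ (pth hc a b : T.Walk a b).support → v ∈ bag c)
    (hedge : ∀ u v : V, Gᶜ.Adj u v → ∃ m, u ∈ bag m ∧ v ∈ bag m)
    (hg : 5 ≤ G.girth)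
    {a b j j' : ι} {u v x y : V}
    (hu : u ∉ bag a) (hv : v ∉ bag a) (huv : Gᶜ.Adj u v)
    (hub : u ∈ bag j) (hvb : v ∈ bag j) (hja : j ≠ a)
    (hstep : (pth hc a j : T.Walk a j).getVert 1 = b)
    (hx : x ∉ bag b) (hy : y ∉ bag b) (hxy : Gᶜ.Adj x y)
    (hxb : x ∈ bag j') (hyb : y ∈ bag j') (hjb : j' ≠ b)
    (hstep' : (pth hc b j' : T.Walk b j').getVert 1 = a) : False := by
  have hab : T.Adj a b := by
    have hlen : 0 < (pth hc a j : T.Walk a j).length :=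
      length_pos_of_ne _ (Ne.symm hja)
    have := (pth hc a j : T.Walk a j).adj_getVert_succ hlen
    rwa [SimpleGraph.Walk.getVert_zero, hstep] at this
  -- u (and v) can only live in bags on the b-side of a
  have sideU : ∀ w : V, w ∉ bag a → w ∈ bag j → ∀ c : ι, w ∈ bag c →
      b ∈ (pth hc a c : T.Walk a c).support := by
    intro w hwa hwj c hwc
    by_contra hbc
    have hca : c ≠ a := fun h => hwa (h ▸ hwc)
    have hs : (pth hc a j : T.Walk a j).getVert 1 ≠ (pth hc a c : T.Walk a c).getVert 1 := by
      intro he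
      rw [hstep] at he
      exact hbc (he ▸ getVert_one_mem _ (Ne.symm hca))
    exact hwa (hconv w j c a hwj hwc (between hc ha hs))
  have sideX : ∀ w : V, w ∉ bag b → w ∈ bag j' → ∀ c : ι, w ∈ bag c →
      a ∈ (pth hc b c : T.Walk b c).support := by
    intro w hwb hwj c hwc
    by_contra hac
    have hcb : c ≠ b := fun h => hwb (h ▸ hwc)
    have hs : (pth hc b j' : T.Walk b j').getVert 1 ≠ (pth hc b c : T.Walk b c).getVert 1 := by
      intro he
      rw [hstep'] at he
      exact hac (he ▸ getVert_one_mem _ (Ne.symm hcb))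
    exact hwb (hconv w j' c b hwj hwc (between hc ha hs))
  have noShare : ∀ w w' : V, w ∉ bag a → w ∈ bag j → w' ∉ bag b → w' ∈ bag j' →
      ∀ c : ι, w ∈ bag c → w' ∈ bag c → False := by
    intro w w' hwa hwj hwb hwj' c hwc hwc'
    exact dich hc ha hab (sideU w hwa hwj c hwc) (sideX w' hwb hwj' c hwc')
  have hGadj : ∀ w w' : V, w ∉ bag a → w ∈ bag j → w' ∉ bag b → w' ∈ bag j' →
      G.Adj w w' := by
    intro w w' hwa hwj hwb hwj'
    have hne : w ≠ w' := by
      intro h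
      exact noShare w w' hwa hwj hwb hwj' j hwj (h ▸ hwj)
    by_contra hadj
    have : Gᶜ.Adj w w' := by rw [SimpleGraph.compl_adj]; exact ⟨hne, hadj⟩
    obtain ⟨c, hc1, hc2⟩ := hedge w w' this
    exact noShare w w' hwa hwj hwb hwj' c hc1 hc2
  exact no_c4 hg (hGadj u x hu hub hx hxb) ((hGadj v x hv hvb hx hxb).symm)
    (hGadj v y hv hvb hy hyb) ((hGadj u y hu hub hy hyb).symm) huv.ne hxy.ne

end TWAux

theorem tw_compl_of_girth_ge_five {V : Type} [Fintype V] (G : SimpleGraph V)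
    (hg : 5 ≤ G.girth) : Fintype.card V - 3 ≤ treewidth Gᶜ := by
  classical
  unfold treewidth
  have D0 : TreeDecomp Gᶜ :=
    { ι := Unit
      T := ⊥
      conn := { preconnected := by
                  intro u v
                  have h := Subsingleton.elim u v
                  subst h
                  exact SimpleGraph.Reachable.refl u
                nonempty := ⟨()⟩ }
      acyclic := by simp
      bag := fun _ => Finset.univ
      cover := fun v => ⟨(), Finset.mem_univ v⟩
      edge_cover := fun u v _ => ⟨(), Finset.mem_univ u, Finset.mem_univ v⟩
      bag_conn := fun v =>
        { preconnected := by
            intro u w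
            have h := Subsingleton.elim u w
            subst h
            exact SimpleGraph.Reachable.refl u
          nonempty := ⟨⟨(), by simp⟩⟩ } }
  have hne : {k | ∃ D : TreeDecomp Gᶜ, ∀ i, (D.bag i).card ≤ k + 1}.Nonempty :=
    ⟨Fintype.card V, D0, fun i => by
      have : (D0.bag i).card ≤ Fintype.card V := Finset.card_le_univ _
      omega⟩
  refine le_csInf hne ?_
  rintro k ⟨D, hk⟩
  by_contra hlt
  push_neg at hlt
  obtain ⟨ι, T, hc, hA, bag, cover, edge_cover, bag_conn⟩ := D
  have hk' : ∀ i, (bag i).card ≤ k + 1 := hk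
  haveI : Nonempty ι := hc.nonempty
  haveI := Classical.decEq ι
  -- every bag misses both endpoints of some non-edge of G
  have hmiss : ∀ i : ι, ∃ p : V × V, Gᶜ.Adj p.1 p.2 ∧ p.1 ∉ bag i ∧ p.2 ∉ bag i := by
    intro i
    have hcard : 3 ≤ (Finset.univ \ bag i).card := by
      have h1 : (bag i).card ≤ k + 1 := hk' i
      have h2 : (Finset.univ \ bag i).card = Fintype.card V - (bag i).card := by
        rw [Finset.card_sdiff_of_subset (Finset.subset_univ _), Finset.card_univ]
      have h4 : (bag i).card ≤ Fintype.card V := Finset.card_le_univ _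
      omega
    have hpos0 : 0 < (Finset.univ \ bag i).card := by omega
    obtain ⟨x, hx⟩ := Finset.card_pos.mp hpos0
    have hc2 : 0 < ((Finset.univ \ bag i).erase x).card := by
      rw [Finset.card_erase_of_mem hx]; omega
    obtain ⟨y, hy⟩ := Finset.card_pos.mp hc2
    have hc3 : 0 < (((Finset.univ \ bag i).erase x).erase y).card := by
      rw [Finset.card_erase_of_mem hy, Finset.card_erase_of_mem hx]; omega
    obtain ⟨z, hz⟩ := Finset.card_pos.mp hc3
    have hyx : y ≠ x := (Finset.mem_erase.mp hy).1
    have hzy : z ≠ y := (Finset.mem_erase.mp hz).1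
    have hzx : z ≠ x := (Finset.mem_erase.mp ((Finset.mem_erase.mp hz).2)).1
    have hxm : x ∉ bag i := (Finset.mem_sdiff.mp hx).2
    have hym : y ∉ bag i := (Finset.mem_sdiff.mp ((Finset.mem_erase.mp hy).2)).2
    have hzm : z ∉ bag i :=
      (Finset.mem_sdiff.mp ((Finset.mem_erase.mp ((Finset.mem_erase.mp hz).2)).2)).2
    by_cases h1 : G.Adj x y
    · by_cases h2 : G.Adj y z
      · have h3 : ¬ G.Adj z x := fun h3 => TWAux.no_tri hg h1 h2 h3
        exact ⟨(z, x), by rw [SimpleGraph.compl_adj]; exact ⟨hzx, h3⟩, hzm, hxm⟩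
      · exact ⟨(y, z), by rw [SimpleGraph.compl_adj]; exact ⟨hzy.symm, fun h => h2 h⟩, hym, hzm⟩
    · exact ⟨(x, y), by rw [SimpleGraph.compl_adj]; exact ⟨hyx.symm, h1⟩, hxm, hym⟩
  set pick : ι → V × V := fun i => (hmiss i).choose with hpickdef
  have hpick : ∀ i, Gᶜ.Adj (pick i).1 (pick i).2 ∧ (pick i).1 ∉ bag i ∧ (pick i).2 ∉ bag i :=
    fun i => (hmiss i).choose_spec
  set en : V × V → ι :=
    fun p => if h : Gᶜ.Adj p.1 p.2 then (edge_cover h).choose else Classical.arbitrary ι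
    with hendef
  have hen : ∀ p : V × V, Gᶜ.Adj p.1 p.2 → p.1 ∈ bag (en p) ∧ p.2 ∈ bag (en p) := by
    intro p h
    simp only [hendef, dif_pos h]
    exact (edge_cover h).choose_spec
  set tgt : ι → ι := fun i => en (pick i) with htgtdef
  have htgt1 : ∀ i, (pick i).1 ∈ bag (tgt i) ∧ (pick i).2 ∈ bag (tgt i) := by
    intro i
    simp only [htgtdef]
    exact hen _ (hpick i).1
  have htgtne : ∀ i, tgt i ≠ i := by
    intro i h
    have h2 := (htgt1 i).1
    rw [h] at h2
    exact (hpick i).2.1 h2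
  set step : ι → ι := fun i => (TWAux.pth hc i (tgt i)).1.getVert 1 with hstepdef
  set i : ℕ → ι := fun m => step^[m] (Classical.arbitrary ι) with hidef
  have histep0 : ∀ m, i (m + 1) = step (i m) := by
    intro m
    rw [hidef]
    exact Function.iterate_succ_apply' step m _
  have histep : ∀ m, i (m + 1) = (TWAux.pth hc (i m) (tgt (i m))).1.getVert 1 :=
    fun m => (histep0 m).trans (congrFun hstepdef (i m))
  have hadj : ∀ m, T.Adj (i m) (i (m + 1)) := by
    intro m
    have hlen : 0 < (TWAux.pth hc (i m) (tgt (i m))).1.length :=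
      TWAux.length_pos_of_ne _ (Ne.symm (htgtne (i m)))
    have h := (TWAux.pth hc (i m) (tgt (i m))).1.adj_getVert_succ hlen
    rw [SimpleGraph.Walk.getVert_zero] at h
    rw [histep m]
    exact h
  have hconv : ∀ v : V, ∀ a b c : ι, v ∈ bag a → v ∈ bag b →
      c ∈ (TWAux.pth hc a b).1.support → v ∈ bag c := by
    intro v a b c hva hvb hcm
    exact TWAux.convex hc hA (bag_conn v) hva hvb hcm
  have hNB : ∀ m, i (m + 2) ≠ i m := by
    intro m heq
    refine TWAux.nb hc hA hconv (fun u v h => edge_cover h) hg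
      (hpick (i m)).2.1 (hpick (i m)).2.2 (hpick (i m)).1
      (htgt1 (i m)).1 (htgt1 (i m)).2 (htgtne (i m)) (histep m).symm
      (hpick (i (m+1))).2.1 (hpick (i (m+1))).2.2 (hpick (i (m+1))).1
      (htgt1 (i (m+1))).1 (htgt1 (i (m+1))).2 (htgtne (i (m+1))) ?_
    rw [← heq]
    exact (histep (m+1)).symm
  have hQ : ∀ m, (TWAux.pth hc (i m) (i 0)).1.length = m ∧
      ∀ m', m = m' + 1 → (TWAux.pth hc (i m) (i 0)).1.getVert 1 = i m' := by
    intro m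
    induction m with
    | zero =>
      have h0 : (TWAux.pth hc (i 0) (i 0)).1 = SimpleGraph.Walk.nil :=
        TWAux.pth_eq hc hA SimpleGraph.Walk.nil SimpleGraph.Walk.IsPath.nil
      rw [h0]
      exact ⟨rfl, fun m' h => absurd h (by omega)⟩
    | succ m ih =>
      have hnotin : i (m + 1) ∉ (TWAux.pth hc (i m) (i 0)).1.support := by
        intro hmem
        have hzR : i (m + 1) ∈ (TWAux.pth hc (i m) (tgt (i m))).1.support := by
          rw [histep m]
          exact TWAux.getVert_one_mem _ (Ne.symm (htgtne (i m)))
        have hne2 : i (m + 1) ≠ i m := (hadj m).ne'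
        have hgv := TWAux.getVert_one_eq hc hA
          (TWAux.pth hc (i m) (tgt (i m))).1 (TWAux.pth hc (i m) (i 0)).1
          (TWAux.pth hc (i m) (tgt (i m))).2 (TWAux.pth hc (i m) (i 0)).2
          hzR hmem hne2
        rw [← histep m] at hgv
        cases m with
        | zero =>
          have h0 : (TWAux.pth hc (i 0) (i 0)).1 = SimpleGraph.Walk.nil :=
            TWAux.pth_eq hc hA SimpleGraph.Walk.nil SimpleGraph.Walk.IsPath.nil
          rw [h0] at hmem
          simp only [SimpleGraph.Walk.support_nil, List.mem_singleton] at hmem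
          exact hne2 hmem
        | succ m' =>
          rw [ih.2 m' rfl] at hgv
          exact hNB m' hgv
      have hw : (SimpleGraph.Walk.cons (hadj m).symm (TWAux.pth hc (i m) (i 0)).1).IsPath :=
        ((TWAux.pth hc (i m) (i 0)).2).cons hnotin
      have heq := TWAux.pth_eq hc hA _ hw
      rw [heq]
      constructor
      · rw [SimpleGraph.Walk.length_cons, ih.1]
      · intro m' hm'
        have hmm : m' = m := by omega
        subst hmm
        rw [SimpleGraph.Walk.getVert_cons_succ]
        exact SimpleGraph.Walk.getVert_zero _
  -- final contradiction
  set C : ℕ := Finset.univ.sup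
    (fun p : V × V => (TWAux.pth hc (i 0) (en p)).1.length) with hCdef
  set m := C + 1 with hmdef
  set R : T.Walk (i m) (tgt (i m)) := (TWAux.pth hc (i m) (tgt (i m))).1 with hRdef
  set P : T.Walk (i m) (i 0) := (TWAux.pth hc (i m) (i 0)).1 with hPdef
  have hRp : R.IsPath := (TWAux.pth hc (i m) (tgt (i m))).2
  have hPp : P.IsPath := (TWAux.pth hc (i m) (i 0)).2
  by_cases hcase : ∃ z, z ∈ R.support ∧ z ∈ P.support ∧ z ≠ i m
  · obtain ⟨z, hz1, hz2, hz3⟩ := hcase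
    have hgv := TWAux.getVert_one_eq hc hA R P hRp hPp hz1 hz2 hz3
    rw [hRdef, ← histep m] at hgv
    rw [hPdef, (hQ m).2 C hmdef] at hgv
    have hgv2 : i (C + 1 + 1) = i C := by rw [← hmdef]; exact hgv
    exact hNB C hgv2
  · push_neg at hcase
    have key : (P.reverse.append R).IsPath := by
      rw [SimpleGraph.Walk.isPath_def, SimpleGraph.Walk.support_append]
      refine List.Nodup.append hPp.reverse.support_nodup
        (hRp.support_nodup.sublist (List.tail_sublist _)) ?_
      intro z hz1 hz2
      have hz1' : z ∈ P.support := by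
        rw [SimpleGraph.Walk.support_reverse, List.mem_reverse] at hz1
        exact hz1
      have hz2' : z ∈ R.support := List.mem_of_mem_tail hz2
      have hzm : z = i m := hcase z hz2' hz1'
      have hnm : i m ∉ R.support.tail := by
        have hnd := hRp.support_nodup
        rw [R.support_eq_cons] at hnd
        exact (List.nodup_cons.mp hnd).1
      rw [hzm] at hz2
      exact hnm hz2
    have heq := TWAux.pth_eq hc hA _ key
    have hlen1 : (TWAux.pth hc (i 0) (tgt (i m))).1.length = m + R.length := by
      rw [heq, SimpleGraph.Walk.length_append, SimpleGraph.Walk.length_reverse, hPdef, (hQ m).1]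
    have hle : (TWAux.pth hc (i 0) (tgt (i m))).1.length ≤ C := by
      have hsup := Finset.le_sup (f := fun p : V × V => (TWAux.pth hc (i 0) (en p)).1.length)
        (Finset.mem_univ (pick (i m)))
      rw [hCdef]
      exact hsup
    have hR1 : 0 < R.length := TWAux.length_pos_of_ne _ (Ne.symm (htgtne (i m)))
    omega
end

section
/- (Treewidth Duality, easy direction) If a graph G contains a bramble of order at least k+1, then tw(G) ≥ k. -/
open SimpleGraph

namespace TWAux

variable {ι : Type} {T : SimpleGraph ι}


/-- Monotonicity of reachability in induced subgraphs. -/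
lemma reach_mono {s t : Set ι} (hst : s ⊆ t) {a b : ι} (ha : a ∈ s) (hb : b ∈ s)
    (h : (T.induce s).Reachable ⟨a, ha⟩ ⟨b, hb⟩) :
    (T.induce t).Reachable ⟨a, hst ha⟩ ⟨b, hst hb⟩ := by
  exact h.map (⟨fun x => ⟨x.1, hst x.2⟩, fun hadj => hadj⟩ : T.induce s →g T.induce t)

/-- Lift a walk with support in `U` to reachability in the induced graph. -/
lemma lift_reach {U : Set ι} : ∀ {x y : ι} (w : T.Walk x y),
    (∀ a ∈ w.support, a ∈ U) → ∀ (hx : x ∈ U) (hy : y ∈ U),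
    (T.induce U).Reachable ⟨x, hx⟩ ⟨y, hy⟩ := by
  intro x y w
  induction w with
  | nil => intro _ hx hy; rfl
  | cons h p ih =>
    intro hsup hx hy
    have hv : _ ∈ U := hsup _ (by rw [SimpleGraph.Walk.support_cons]; exact List.mem_cons_of_mem _ p.start_mem_support)
    have h1 : (T.induce U).Adj ⟨_, hx⟩ ⟨_, hv⟩ := h
    exact h1.reachable.trans (ih (fun a ha => hsup a (by rw [SimpleGraph.Walk.support_cons]; exact List.mem_cons_of_mem _ ha)) hv hy)

/-- Any path between two vertices of a connected set stays inside it (acyclic graph). -/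
lemma path_support_subset (hT : T.IsAcyclic) {S : Set ι} (hS : (T.induce S).Connected)
    {x y : ι} (hx : x ∈ S) (hy : y ∈ S) (p : T.Path x y) :
    ∀ a ∈ p.1.support, a ∈ S := by
  classical
  obtain ⟨w0⟩ := hS.preconnected ⟨x, hx⟩ ⟨y, hy⟩
  let w : T.Walk x y := w0.map ⟨Subtype.val, fun hadj => hadj⟩
  have hwsup : ∀ a ∈ w.support, a ∈ S := by
    intro a ha
    rw [SimpleGraph.Walk.support_map] at ha
    obtain ⟨⟨b, hb⟩, _, rfl⟩ := List.mem_map.mp ha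
    exact hb
  have : p = w.toPath := hT.path_unique p w.toPath
  intro a ha
  rw [this] at ha
  exact hwsup a (w.support_toPath_subset ha)

/-- The intersection of two intersecting subtrees is a subtree. -/
lemma inter_connected (hc : T.Connected) (hT : T.IsAcyclic) {S P : Set ι}
    (hS : (T.induce S).Connected) (hP : (T.induce P).Connected)
    (hne : (S ∩ P).Nonempty) : (T.induce (S ∩ P)).Connected := by
  classical
  rw [SimpleGraph.connected_iff]
  refine ⟨?_, ?_⟩
  · rintro ⟨x, hxS, hxP⟩ ⟨y, hyS, hyP⟩
    obtain ⟨w⟩ := hc.preconnected x y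
    have hsub : ∀ a ∈ w.toPath.1.support, a ∈ S ∩ P := fun a ha =>
      ⟨path_support_subset hT hS hxS hyS w.toPath a ha,
       path_support_subset hT hP hxP hyP w.toPath a ha⟩
    exact lift_reach w.toPath.1 hsub _ _
  · obtain ⟨m, hm⟩ := hne
    exact ⟨⟨m, hm⟩⟩

/-- crossing lemma for walks. -/
lemma walk_cross {S2 S3 : Set ι} : ∀ {x y : ι} (w : T.Walk x y),
    x ∈ S2 → y ∈ S3 → (∀ a ∈ w.support, a ∈ S2 ∪ S3) →
    (∃ m ∈ w.support, m ∈ S2 ∩ S3) ∨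
      ∃ a b, T.Adj a b ∧ a ∈ S2 ∧ a ∉ S3 ∧ b ∈ S3 ∧ b ∉ S2 := by
  intro x y w
  induction w with
  | nil => intro hx hy _; exact Or.inl ⟨_, by simp, hx, hy⟩
  | @cons u v z h p ih =>
    intro hx hy hsup
    by_cases hu3 : u ∈ S3
    · exact Or.inl ⟨u, by simp, hx, hu3⟩
    by_cases hv2 : v ∈ S2
    · rcases ih hv2 hy (fun a ha => hsup a (by simp [ha])) with ⟨m, hm, hm'⟩ | hr
      · exact Or.inl ⟨m, by simp [hm], hm'⟩
      · exact Or.inr hr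
    · have hv3 : v ∈ S3 := by
        rcases hsup v (by simp) with h2 | h3
        · exact absurd h2 hv2
        · exact h3
      exact Or.inr ⟨u, v, h, hx, hu3, hv3, hv2⟩

/-- Helly property for three subtrees. -/
lemma helly3 (hc : T.Connected) (hT : T.IsAcyclic) {S1 S2 S3 : Set ι}
    (h1 : (T.induce S1).Connected) (h2 : (T.induce S2).Connected)
    (h3 : (T.induce S3).Connected)
    (h12 : (S1 ∩ S2).Nonempty) (h13 : (S1 ∩ S3).Nonempty) (h23 : (S2 ∩ S3).Nonempty) :
    (S1 ∩ S2 ∩ S3).Nonempty := by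
  classical
  obtain ⟨x, hx1, hx2⟩ := h12
  obtain ⟨y, hy1, hy3⟩ := h13
  obtain ⟨z, hz2, hz3⟩ := h23
  obtain ⟨w⟩ := hc.preconnected x y
  set p := w.toPath with hp
  have hpS1 : ∀ a ∈ p.1.support, a ∈ S1 := path_support_subset hT h1 hx1 hy1 p
  have hU : (T.induce (S2 ∪ S3)).Connected :=
    induce_union_connected h2.preconnected h3.preconnected ⟨z, hz2, hz3⟩
  have hpU : ∀ a ∈ p.1.support, a ∈ S2 ∪ S3 :=
    path_support_subset hT hU (Or.inl hx2) (Or.inr hy3) p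
  rcases walk_cross p.1 hx2 hy3 hpU with ⟨m, hm, hm2, hm3⟩ | ⟨a, b, hab, ha2, ha3, hb3, hb2⟩
  · exact ⟨m, ⟨hpS1 m hm, hm2⟩, hm3⟩
  · exfalso
    obtain ⟨w2⟩ := hc.preconnected z a
    set r := w2.toPath with hr
    have hrS2 : ∀ c ∈ r.1.support, c ∈ S2 := path_support_subset hT h2 hz2 ha2 r
    have hbr : b ∉ r.1.support := fun hmem => hb2 (hrS2 b hmem)
    have hbrev : b ∉ r.1.reverse.support := by
      rwa [SimpleGraph.Walk.support_reverse, List.mem_reverse]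
    have hq : (SimpleGraph.Walk.cons hab.symm r.1.reverse).IsPath :=
      SimpleGraph.Walk.IsPath.cons (r.2.reverse) hbrev
    have haS3 : a ∈ S3 := by
      have := path_support_subset hT h3 hb3 hz3 ⟨_, hq⟩ a
        (by simp [SimpleGraph.Walk.support_cons, SimpleGraph.Walk.support_reverse])
      exact this
    exact ha3 haS3

/-- Helly property for a finite list of subtrees. -/
lemma helly_list (hc : T.Connected) (hT : T.IsAcyclic) :
    ∀ (l : List (Set ι)) (S : Set ι), (T.induce S).Connected →
      (∀ P ∈ l, (T.induce P).Connected) →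
      (∀ P ∈ l, (S ∩ P).Nonempty) →
      (∀ P ∈ l, ∀ Q ∈ l, (P ∩ Q).Nonempty) →
      ∃ m, m ∈ S ∧ ∀ P ∈ l, m ∈ P := by
  intro l
  induction l with
  | nil =>
    intro S hS _ _ _
    obtain ⟨⟨m, hm⟩⟩ := hS.nonempty
    exact ⟨m, hm, by simp⟩
  | cons P0 rest ih =>
    intro S hS hconn hint hpair
    have hSP0 : (S ∩ P0).Nonempty := hint P0 (by simp)
    have hconnP0 : (T.induce P0).Connected := hconn P0 (by simp)
    obtain ⟨m, hm, hmrest⟩ := ih (S ∩ P0)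
      (inter_connected hc hT hS hconnP0 hSP0)
      (fun P hP => hconn P (by simp [hP]))
      (fun P hP => by
        have := helly3 hc hT hS hconnP0 (hconn P (by simp [hP])) hSP0
          (hint P (by simp [hP])) (hpair P0 (by simp) P (by simp [hP]))
        exact this)
      (fun P hP Q hQ => hpair P (by simp [hP]) Q (by simp [hQ]))
    exact ⟨m, hm.1, fun P hP => by
      rcases List.mem_cons.mp hP with rfl | hP'
      · exact hm.2
      · exact hmrest P hP'⟩




variable {V : Type} {G : SimpleGraph V}

/-- The subtree of the decomposition tree met by a vertex set. -/
def TS (D : TreeDecomp G) (A : Set V) : Set D.ι := {i | ∃ v ∈ A, v ∈ D.bag i}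

lemma TS_reach (D : TreeDecomp G) {A : Set V} :
    ∀ {x y : ↥A} (_ : (G.induce A).Walk x y) (i j : D.ι)
      (hi : x.1 ∈ D.bag i) (hj : y.1 ∈ D.bag j),
    (D.T.induce (TS D A)).Reachable ⟨i, x.1, x.2, hi⟩ ⟨j, y.1, y.2, hj⟩ := by
  intro x y w
  induction w with
  | @nil u =>
    intro i j hi hj
    have hsub : {i | u.1 ∈ D.bag i} ⊆ TS D A := fun i hi => ⟨u.1, u.2, hi⟩
    exact reach_mono hsub hi hj ((D.bag_conn u.1).preconnected ⟨i, hi⟩ ⟨j, hj⟩)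
  | @cons u u' y h p ih =>
    intro i j hi hj
    have hadj : G.Adj u.1 u'.1 := h
    obtain ⟨m, hm1, hm2⟩ := D.edge_cover hadj
    have hsub : {i | u.1 ∈ D.bag i} ⊆ TS D A := fun i hi => ⟨u.1, u.2, hi⟩
    have step1 := reach_mono hsub hi hm1 ((D.bag_conn u.1).preconnected ⟨i, hi⟩ ⟨m, hm1⟩)
    exact step1.trans (ih m j hm2 hj)

lemma TS_connected (D : TreeDecomp G) {A : Set V} (hA : (G.induce A).Connected) :
    (D.T.induce (TS D A)).Connected := by
  rw [SimpleGraph.connected_iff]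
  constructor
  · rintro ⟨i, v, hvA, hvi⟩ ⟨j, w, hwA, hwj⟩
    obtain ⟨p⟩ := hA.preconnected ⟨v, hvA⟩ ⟨w, hwA⟩
    exact TS_reach D p i j hvi hwj
  · obtain ⟨⟨v, hvA⟩⟩ := hA.nonempty
    obtain ⟨i, hi⟩ := D.cover v
    exact ⟨⟨i, v, hvA, hi⟩⟩

lemma TS_touch (D : TreeDecomp G) {A B : Set V} (h : Touch G A B) :
    (TS D A ∩ TS D B).Nonempty := by
  rcases h with ⟨v, hvA, hvB⟩ | ⟨a, ha, b, hbB, hab⟩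
  · obtain ⟨i, hi⟩ := D.cover v
    exact ⟨i, ⟨v, hvA, hi⟩, ⟨v, hvB, hi⟩⟩
  · obtain ⟨i, hia, hib⟩ := D.edge_cover hab
    exact ⟨i, ⟨a, ha, hia⟩, ⟨b, hbB, hib⟩⟩

/-- The trivial tree decomposition of a finite graph. -/
noncomputable def trivialDecomp (G : SimpleGraph V) [Fintype V] : TreeDecomp G where
  ι := Unit
  T := ⊥
  conn := by
    rw [SimpleGraph.connected_iff]
    exact ⟨fun a b => by rw [Subsingleton.elim a b], ⟨()⟩⟩
  acyclic := SimpleGraph.isAcyclic_bot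
  bag := fun _ => Finset.univ
  cover := fun v => ⟨(), Finset.mem_univ v⟩
  edge_cover := fun u v _ => ⟨(), Finset.mem_univ u, Finset.mem_univ v⟩
  bag_conn := fun v => by
    rw [SimpleGraph.connected_iff]
    refine ⟨fun a b => by rw [Subsingleton.elim a b], ⟨⟨(), Finset.mem_univ v⟩⟩⟩

end TWAux

theorem treewidth_ge_of_bramble {V : Type} (G : SimpleGraph V) (k : ℕ) (𝓑 : Set (Set V))
    (hb : IsBramble G 𝓑) (ho : ∀ S : Set V, IsHittingSet 𝓑 S → k + 1 ≤ S.ncard) :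
    k ≤ treewidth G := by
  classical
  have hApos : ∀ A ∈ 𝓑, A.Nonempty := fun A hA => by
    obtain ⟨⟨v, hv⟩⟩ := (hb.1 A hA).nonempty
    exact ⟨v, hv⟩
  have hVhit : IsHittingSet 𝓑 Set.univ := fun A hA => by
    obtain ⟨v, hv⟩ := hApos A hA
    exact ⟨v, hv, trivial⟩
  have hVfin : (Set.univ : Set V).Finite := by
    by_contra hinf
    have h1 := ho _ hVhit
    rw [Set.Infinite.ncard hinf] at h1
    omega
  haveI : Finite V := Set.finite_univ_iff.mp hVfin
  haveI : Fintype V := Fintype.ofFinite V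
  have hBne : 𝓑.Nonempty := by
    by_contra hne
    have hh : IsHittingSet 𝓑 ∅ := fun A hA => (hne ⟨A, hA⟩).elim
    have h1 := ho ∅ hh
    rw [Set.ncard_empty] at h1
    omega
  have hmem : Fintype.card V ∈ {m | ∃ D : TreeDecomp G, ∀ i, (D.bag i).card ≤ m + 1} :=
    ⟨TWAux.trivialDecomp G, fun _ => by
      simp only [TWAux.trivialDecomp, Finset.card_univ]
      omega⟩
  have hinfmem : treewidth G ∈ {m | ∃ D : TreeDecomp G, ∀ i, (D.bag i).card ≤ m + 1} :=
    Nat.sInf_mem ⟨_, hmem⟩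
  obtain ⟨D, hD⟩ := hinfmem
  by_contra hlt
  push_neg at hlt
  have hDk : ∀ i, (D.bag i).card ≤ k := fun i => by
    have := hD i
    omega
  have hBfin : 𝓑.Finite := Set.toFinite 𝓑
  obtain ⟨A0, hA0⟩ := hBne
  have hmemlist : ∀ P ∈ hBfin.toFinset.toList.map (TWAux.TS D), ∃ A ∈ 𝓑, P = TWAux.TS D A := by
    intro P hP
    obtain ⟨A, hA, rfl⟩ := List.mem_map.mp hP
    exact ⟨A, (Set.Finite.mem_toFinset hBfin).mp (Finset.mem_toList.mp hA), rfl⟩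
  obtain ⟨m, _, hmall⟩ := TWAux.helly_list D.conn D.acyclic
    (hBfin.toFinset.toList.map (TWAux.TS D)) (TWAux.TS D A0)
    (TWAux.TS_connected D (hb.1 A0 hA0))
    (fun P hP => by
      obtain ⟨A, hA, rfl⟩ := hmemlist P hP
      exact TWAux.TS_connected D (hb.1 A hA))
    (fun P hP => by
      obtain ⟨A, hA, rfl⟩ := hmemlist P hP
      exact TWAux.TS_touch D (hb.2 A0 hA0 A hA))
    (fun P hP Q hQ => by
      obtain ⟨A, hA, rfl⟩ := hmemlist P hP
      obtain ⟨B, hB, rfl⟩ := hmemlist Q hQ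
      exact TWAux.TS_touch D (hb.2 A hA B hB))
  have hhit : IsHittingSet 𝓑 ↑(D.bag m) := by
    intro A hA
    have hmA : m ∈ TWAux.TS D A := by
      apply hmall
      exact List.mem_map.mpr ⟨A, Finset.mem_toList.mpr ((Set.Finite.mem_toFinset hBfin).mpr hA), rfl⟩
    obtain ⟨v, hvA, hvb⟩ := hmA
    exact ⟨v, hvA, hvb⟩
  have h2 := ho _ hhit
  rw [Set.ncard_coe_finset] at h2
  have h3 := hDk m
  omega
end
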